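/- Suppose the killed Markov process $(X_t)$ satisfies: (i) the Champagnat–Villemonais condition (A1) at time $t_0$ with constant $c_0 > 0$ and measure $\nu$, i.e. $\mathcal{L}_x(X_{t_0} \mid \tau_\partial > t_0) \ge c_0\nu$ for all $x$; (ii) $\mathbb{P}_x(\tau_\partial > t) > 0$ for all $x, t$; and (iii) there exist $t_1 > 0$ and a bounded, everywhere strictly positive pointwise right eigenfunction $h \in \mathcal{B}_b(\chi;\mathbb{R}_{>0})$ with $P_{t_1}h = \hat{\lambda}h$ (necessarily $\hat{\lambda} > 0$). Then the process satisfies condition (A2): there exists a constant $K < \infty$ (one may take $K = \|h\|_\infty^2/(c_0\nu(h)^2)$) such that $\frac{\mathbb{P}_x(\tau_\partial > n t_1)}{\mathbb{P}_\nu(\tau_\partial > n t_1)} \le K$ for all $x \in \chi$ and all $n$ with $n t_1 \ge t_0$. -/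

import Mathlib

open MeasureTheory ProbabilityTheory
open scoped ENNReal NNReal

/-- condition (A1) together with a bounded, everywhere strictly positive
pointwise right eigenfunction `h` of `P_{t₁}` implies condition (A2):
`ℙ_x(τ_∂ > n t₁) ≤ K · ℙ_ν(τ_∂ > n t₁)` for all `x` and all `n` with `n t₁ ≥ t₀`,
with `K = ‖h‖_∞² / (c₀ ν(h)²)`. -/
theorem stmt_15 {χ : Type*} [MeasurableSpace χ]
    (P : ℝ → Kernel χ χ)
    (hPsub : ∀ t x, P t x Set.univ ≤ 1)
    (hsemi : ∀ s t : ℝ, 0 ≤ s → 0 ≤ t → ∀ x, ∀ u : Set χ, MeasurableSet u →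
      P (s + t) x u = ∫⁻ y, P t y u ∂(P s x))
    (hpos : ∀ x, ∀ t : ℝ, 0 ≤ t → 0 < P t x Set.univ)
    (t0 : ℝ) (ht0 : 0 < t0) (c0 : ℝ) (hc0 : 0 < c0)
    (ν : Measure χ) [IsProbabilityMeasure ν]
    (hA1 : ∀ x, ∀ s : Set χ, MeasurableSet s →
      ENNReal.ofReal c0 * ν s * P t0 x Set.univ ≤ P t0 x s)
    (t1 : ℝ) (ht1 : 0 < t1)
    (h : χ → ℝ) (hhm : Measurable h) (hhpos : ∀ x, 0 < h x)
    (Ch : ℝ) (hhbd : ∀ x, h x ≤ Ch)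
    (lhat : ℝ)
    (heig : ∀ x, ∫ y, h y ∂(P t1 x) = lhat * h x) :
    ∀ x, ∀ n : ℕ, t0 ≤ (n : ℝ) * t1 →
      P ((n : ℝ) * t1) x Set.univ
        ≤ ENNReal.ofReal (Ch ^ 2 / (c0 * (∫ y, h y ∂ν) ^ 2))
            * ∫⁻ y, P ((n : ℝ) * t1) y Set.univ ∂ν := by
  intro x n hn
  -- finite measure instances
  have hfin : ∀ t (y : χ), IsFiniteMeasure (P t y) :=
    fun t y => ⟨(hPsub t y).trans_lt ENNReal.one_lt_top⟩
  -- integrability of h w.r.t. any finite measure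
  have hint : ∀ (μ : Measure χ) [IsFiniteMeasure μ], Integrable h μ := by
    intro μ _
    refine ⟨hhm.aestronglyMeasurable, HasFiniteIntegral.of_bounded (C := Ch) ?_⟩
    exact ae_of_all _ fun y => by rw [Real.norm_eq_abs, abs_of_pos (hhpos y)]; exact hhbd y
  set H : χ → ℝ≥0∞ := fun y => ENNReal.ofReal (h y) with hH
  have hHm : Measurable H := hhm.ennreal_ofReal
  -- conversion between Bochner and Lebesgue integrals of h
  have hconv : ∀ (μ : Measure χ) [IsFiniteMeasure μ],
      ∫⁻ y, H y ∂μ = ENNReal.ofReal (∫ y, h y ∂μ) := by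
    intro μ _
    exact (ofReal_integral_eq_lintegral_ofReal (hint μ)
      (ae_of_all _ fun y => (hhpos y).le)).symm
  -- positivity of ∫⁻ H for positive measures
  have hHposint : ∀ (μ : Measure χ), 0 < μ Set.univ → 0 < ∫⁻ y, H y ∂μ := by
    intro μ hμ
    rw [lintegral_pos_iff_support hHm]
    have hsupp : Function.support H = Set.univ := by
      ext y
      simp [hH, Function.mem_support, (ENNReal.ofReal_pos.mpr (hhpos y)).ne']
    rwa [hsupp]
  -- positivity of the eigenvalue
  have hCh : 0 < Ch := (hhpos x).trans_le (hhbd x)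
  have hlhat : 0 < lhat := by
    have h1 : IsFiniteMeasure (P t1 x) := hfin t1 x
    have h2 : 0 < ∫⁻ y, H y ∂(P t1 x) := hHposint _ (hpos x t1 ht1.le)
    rw [hconv (P t1 x)] at h2
    have h3 : 0 < ∫ y, h y ∂(P t1 x) := ENNReal.ofReal_pos.mp h2
    rw [heig x] at h3
    rcases mul_pos_iff.mp h3 with ⟨h4, _⟩ | ⟨_, h5⟩
    · exact h4
    · exact absurd (hhpos x) (not_lt.mpr h5.le)
  set L : ℝ≥0∞ := ENNReal.ofReal lhat with hL
  -- eigen identity in ℝ≥0∞ form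
  have heig' : ∀ y, ∫⁻ z, H z ∂(P t1 y) = L * H y := by
    intro y
    have := hfin t1 y
    rw [hconv (P t1 y), heig y, ENNReal.ofReal_mul hlhat.le]
  -- semigroup as measure bind
  have hbind : ∀ s t : ℝ, 0 ≤ s → 0 ≤ t → ∀ y : χ,
      P (s + t) y = (P s y).bind (fun z => P t z) := by
    intro s t hs ht y
    ext u hu
    rw [Measure.bind_apply hu (P t).measurable.aemeasurable, hsemi s t hs ht y u hu]
  -- iterated eigen identity
  have hiter : ∀ m : ℕ, ∀ y : χ,
      ∫⁻ z, H z ∂(P (((m : ℝ) + 1) * t1) y) = L ^ (m + 1) * H y := by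
    intro m
    induction m with
    | zero => intro y; simpa using heig' y
    | succ m ih =>
        intro y
        have hsum : ((m : ℝ) + 1 + 1) * t1 = ((m : ℝ) + 1) * t1 + t1 := by ring
        have hs : (0:ℝ) ≤ ((m : ℝ) + 1) * t1 := by positivity
        push_cast
        rw [hsum, hbind _ _ hs ht1.le y, Measure.lintegral_bind (P t1).measurable.aemeasurable hHm.aemeasurable]
        calc ∫⁻ z, (∫⁻ w, H w ∂(P t1 z)) ∂(P (((m : ℝ) + 1) * t1) y)
            = ∫⁻ z, L * H z ∂(P (((m : ℝ) + 1) * t1) y) := by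
              simp_rw [heig']
          _ = L * ∫⁻ z, H z ∂(P (((m : ℝ) + 1) * t1) y) :=
              lintegral_const_mul _ hHm
          _ = L ^ (m + 1 + 1) * H y := by rw [ih y]; ring
  -- n ≥ 1
  obtain ⟨m, rfl⟩ : ∃ m : ℕ, n = m + 1 := by
    cases n with
    | zero => exfalso; simp at hn; linarith
    | succ m => exact ⟨m, rfl⟩
  have hTn : ((m + 1 : ℕ) : ℝ) * t1 = ((m : ℝ) + 1) * t1 := by push_cast; ring
  rw [hTn] at hn ⊢
  set T : ℝ := ((m : ℝ) + 1) * t1 with hT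
  have hTpos : (0:ℝ) ≤ T := by positivity
  -- notation
  set a' : ℝ≥0∞ := ∫⁻ y, H y ∂ν with ha'
  set c0' : ℝ≥0∞ := ENNReal.ofReal c0 with hc0'
  set Ch' : ℝ≥0∞ := ENNReal.ofReal Ch with hCh'
  have hmuniv : Measurable fun y => P T y Set.univ :=
    Kernel.measurable_coe _ MeasurableSet.univ
  -- Inequality (1): c0' * a' * P T x univ ≤ L^(m+1) * H x
  have hineq1 : c0' * a' * P T x Set.univ ≤ L ^ (m + 1) * H x := by
    have hs : (0:ℝ) ≤ T - t0 := by linarith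
    have hTsplit : T = (T - t0) + t0 := by ring
    -- measure inequality from A1
    have hmle : ∀ y : χ, c0' * P t0 y Set.univ * a' ≤ ∫⁻ z, H z ∂(P t0 y) := by
      intro y
      have hle : ((c0' * P t0 y Set.univ) • ν) ≤ P t0 y := by
        refine Measure.le_iff.mpr fun u hu => ?_
        rw [Measure.smul_apply, smul_eq_mul]
        calc c0' * P t0 y Set.univ * ν u = c0' * ν u * P t0 y Set.univ := by ring
          _ ≤ P t0 y u := hA1 y u hu
      calc c0' * P t0 y Set.univ * a'
          = ∫⁻ z, H z ∂((c0' * P t0 y Set.univ) • ν) := by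
            rw [lintegral_smul_measure, ← ha', smul_eq_mul]
        _ ≤ ∫⁻ z, H z ∂(P t0 y) := lintegral_mono' hle le_rfl
    have hPT : P T x Set.univ = ∫⁻ y, P t0 y Set.univ ∂(P (T - t0) x) := by
      conv_lhs => rw [hTsplit]
      exact hsemi _ _ hs ht0.le x Set.univ MeasurableSet.univ
    have hHT : ∫⁻ z, H z ∂(P T x) = ∫⁻ y, (∫⁻ z, H z ∂(P t0 y)) ∂(P (T - t0) x) := by
      conv_lhs => rw [hTsplit, hbind _ _ hs ht0.le x]
      exact Measure.lintegral_bind (P t0).measurable.aemeasurable hHm.aemeasurable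
    calc c0' * a' * P T x Set.univ
        = ∫⁻ y, c0' * a' * P t0 y Set.univ ∂(P (T - t0) x) := by
          rw [lintegral_const_mul _ (Kernel.measurable_coe (P t0) MeasurableSet.univ), hPT]
      _ ≤ ∫⁻ y, (∫⁻ z, H z ∂(P t0 y)) ∂(P (T - t0) x) := by
          refine lintegral_mono fun y => ?_
          calc c0' * a' * P t0 y Set.univ = c0' * P t0 y Set.univ * a' := by ring
            _ ≤ _ := hmle y
      _ = ∫⁻ z, H z ∂(P T x) := hHT.symm
      _ = L ^ (m + 1) * H x := hiter m x
  -- Inequality (2): L^(m+1) * a' ≤ Ch' * ∫⁻ y, P T y univ ∂ν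
  have hineq2 : L ^ (m + 1) * a' ≤ Ch' * ∫⁻ y, P T y Set.univ ∂ν := by
    have hup : ∀ y : χ, L ^ (m + 1) * H y ≤ Ch' * P T y Set.univ := by
      intro y
      rw [← hiter m y]
      calc ∫⁻ z, H z ∂(P T y) ≤ ∫⁻ _, Ch' ∂(P T y) :=
            lintegral_mono fun z => ENNReal.ofReal_le_ofReal (hhbd z)
        _ = Ch' * P T y Set.univ := lintegral_const _
    calc L ^ (m + 1) * a' = ∫⁻ y, L ^ (m + 1) * H y ∂ν := (lintegral_const_mul _ hHm).symm
      _ ≤ ∫⁻ y, Ch' * P T y Set.univ ∂ν := lintegral_mono fun y => hup y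
      _ = Ch' * ∫⁻ y, P T y Set.univ ∂ν := lintegral_const_mul _ hmuniv
  -- positivity and finiteness of a'
  have ha'eq : a' = ENNReal.ofReal (∫ y, h y ∂ν) := hconv ν
  have ha'pos : 0 < a' := hHposint ν (by simp)
  have haν : 0 < ∫ y, h y ∂ν := by
    have h2 := ha'pos
    rw [ha'eq] at h2
    exact ENNReal.ofReal_pos.mp h2
  have ha'top : a' ≠ ⊤ := by rw [ha'eq]; exact ENNReal.ofReal_ne_top
  -- combine
  set V : ℝ≥0∞ := ∫⁻ y, P T y Set.univ ∂ν with hV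
  have hcomb : (c0' * a' ^ 2) * P T x Set.univ ≤ Ch' ^ 2 * V := by
    calc (c0' * a' ^ 2) * P T x Set.univ = (c0' * a' * P T x Set.univ) * a' := by ring
      _ ≤ (L ^ (m + 1) * H x) * a' := mul_le_mul_left hineq1 _
      _ ≤ (L ^ (m + 1) * Ch') * a' := by
          gcongr
          exact ENNReal.ofReal_le_ofReal (hhbd x)
      _ = (L ^ (m + 1) * a') * Ch' := by ring
      _ ≤ (Ch' * V) * Ch' := mul_le_mul_left hineq2 _
      _ = Ch' ^ 2 * V := by ring
  have hcne : c0' * a' ^ 2 ≠ 0 :=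
    mul_ne_zero (ENNReal.ofReal_pos.mpr hc0).ne' (pow_ne_zero 2 ha'pos.ne')
  have hctop : c0' * a' ^ 2 ≠ ⊤ :=
    ENNReal.mul_ne_top ENNReal.ofReal_ne_top (ENNReal.pow_ne_top ha'top)
  have hKeq : ENNReal.ofReal (Ch ^ 2 / (c0 * (∫ y, h y ∂ν) ^ 2))
      = Ch' ^ 2 / (c0' * a' ^ 2) := by
    rw [ENNReal.ofReal_div_of_pos (by positivity), ENNReal.ofReal_mul hc0.le,
      ENNReal.ofReal_pow hCh.le, ENNReal.ofReal_pow haν.le, ha'eq]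
  rw [hKeq, div_eq_mul_inv, mul_right_comm, ← div_eq_mul_inv,
    ENNReal.le_div_iff_mul_le (Or.inl hcne) (Or.inl hctop)]
  calc P T x Set.univ * (c0' * a' ^ 2) = (c0' * a' ^ 2) * P T x Set.univ := mul_comm _ _
    _ ≤ Ch' ^ 2 * V := hcomb
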